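/- The regular open algebra B(M₃) of the poset X_{M₃} is the 64-element Boolean algebra: its atoms are exactly the six singletons {(a,b)}, {(a,c)}, {(b,a)}, {(b,c)}, {(c,a)}, {(c,b)}. -/

import Mathlib

/-- The diamond lattice `M₃ = {0, a, b, c, 1}` with three pairwise
incomparable middle elements `a`, `b`, `c`. -/
inductive M3 : Type
  | z | a | b | c | o
deriving DecidableEq

instance : Fintype M3 where
  elems := {M3.z, M3.a, M3.b, M3.c, M3.o}
  complete := fun x => by cases x <;> first | decide | simp

/-- The order of `M₃`: `x ≤ y` iff `x = y`, or `x = 0`, or `y = 1`. -/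
def M3.le (x y : M3) : Prop := x = y ∨ x = M3.z ∨ y = M3.o

instance : DecidableRel M3.le := fun x y =>
  inferInstanceAs (Decidable (x = y ∨ x = M3.z ∨ y = M3.o))

theorem M3.le_refl : ∀ x : M3, M3.le x x := by decide
theorem M3.le_trans : ∀ x y w : M3, M3.le x y → M3.le y w → M3.le x w := by decide
theorem M3.le_antisymm : ∀ x y : M3, M3.le x y → M3.le y x → x = y := by decide

instance : PartialOrder M3 where
  le := M3.le
  le_refl := M3.le_refl
  le_trans := M3.le_trans
  le_antisymm := M3.le_antisymm

instance : DecidableRel ((· ≤ ·) : M3 → M3 → Prop) := fun x y =>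
  inferInstanceAs (Decidable (M3.le x y))

theorem M3.z_le : ∀ x : M3, M3.le M3.z x := by decide

instance : OrderBot M3 where
  bot := M3.z
  bot_le := M3.z_le

/-- The poset `X_{M₃} = {(x,y) ∈ M₃ × M₃ | x ≰ y}` with
`(x,y) ⊑ (x',y') ↔ x ≤ x' ∧ y' ≤ y`. -/
def XM3 : Type := {p : M3 × M3 // ¬ p.1 ≤ p.2}

def XM3.mk (p : M3 × M3) (h : ¬ p.1 ≤ p.2) : XM3 := ⟨p, h⟩

def XM3.val (x : XM3) : M3 × M3 := Subtype.val x

instance : PartialOrder XM3 where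
  le x y := x.val.1 ≤ y.val.1 ∧ y.val.2 ≤ x.val.2
  le_refl x := ⟨le_refl _, le_refl _⟩
  le_trans x y z h h' := ⟨h.1.trans h'.1, h'.2.trans h.2⟩
  le_antisymm x y h h' :=
    Subtype.ext (Prod.ext (le_antisymm h.1 h'.1) (le_antisymm h'.2 h.2))

/-- Interior in the downset topology: `□U = {x | ↓x ⊆ U}`. -/
def box (U : Set XM3) : Set XM3 := {x | ∀ y, y ≤ x → y ∈ U}

/-- Closure in the downset topology: `◇U = {x | ↓x ∩ U ≠ ∅}`. -/
def dia (U : Set XM3) : Set XM3 := {x | ∃ y, y ≤ x ∧ y ∈ U}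

/-- The `⊑`-downset of `x` in `X_{M₃}`. -/
def dn (x : XM3) : Set XM3 := {y | y ≤ x}

section Aux

instance : DecidableEq XM3 :=
  inferInstanceAs (DecidableEq {p : M3 × M3 // ¬ p.1 ≤ p.2})

instance : Fintype XM3 :=
  inferInstanceAs (Fintype {p : M3 × M3 // ¬ p.1 ≤ p.2})

instance : DecidableRel ((· ≤ ·) : XM3 → XM3 → Prop) := fun x y =>
  inferInstanceAs (Decidable (x.val.1 ≤ y.val.1 ∧ y.val.2 ≤ x.val.2))

/-- The six minimal points of `X_{M₃}`. -/
def atomL : List XM3 :=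
  [⟨(M3.a, M3.b), by decide⟩, ⟨(M3.a, M3.c), by decide⟩,
   ⟨(M3.b, M3.a), by decide⟩, ⟨(M3.b, M3.c), by decide⟩,
   ⟨(M3.c, M3.a), by decide⟩, ⟨(M3.c, M3.b), by decide⟩]

def atomSet : Set XM3 := {x | x ∈ atomL}

lemma F1 : ∀ x : XM3, ∃ m ∈ atomL, m ≤ x := by decide

lemma F2 : ∀ m ∈ atomL, ∀ z : XM3, z ≤ m → z = m := by decide

lemma F3 : ∀ m ∈ atomL, ∀ x : XM3,
    (∀ y, y ≤ x → ∃ z, z ≤ y ∧ z = m) ↔ x = m := by decide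

lemma singleton_reg : ∀ m ∈ atomL, ({m} : Set XM3) = box (dia {m}) := by
  intro m hm
  ext x
  simp only [box, dia, Set.mem_setOf_eq, Set.mem_singleton_iff]
  exact (F3 m hm x).symm

lemma sub1 (W : Set XM3) (hW : W ⊆ atomSet) : W ⊆ box (dia W) := by
  intro w hw y hy
  have h : y = w := F2 w (hW hw) y hy
  exact ⟨w, by rw [h], hw⟩

lemma sub2 (W : Set XM3) (hW : W ⊆ atomSet) : dia (box (dia W)) = dia W := by
  ext x
  constructor
  · rintro ⟨z, hzx, hz⟩
    obtain ⟨v, hvz, hv⟩ := hz z le_rfl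
    exact ⟨v, le_trans hvz hzx, hv⟩
  · rintro ⟨z, hzx, hz⟩
    exact ⟨z, hzx, sub1 W hW hz⟩

lemma key1 (W : Set XM3) (hW : W ⊆ atomSet) :
    box (dia W) = box (dia (box (dia W))) := by
  rw [sub2 W hW]

lemma key3 (U : Set XM3) (hU : U = box (dia U)) {u : XM3} (hu : u ∈ U) :
    ∃ m ∈ atomL, m ∈ U := by
  obtain ⟨m, hm, hmu⟩ := F1 u
  have hu' : u ∈ box (dia U) := hU ▸ hu
  obtain ⟨v, hvm, hv⟩ := hu' m hmu
  have h : v = m := F2 m hm v hvm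
  exact ⟨m, hm, h ▸ hv⟩

lemma key2 (U : Set XM3) (hU : U = box (dia U)) :
    U = box (dia (U ∩ atomSet)) := by
  have hdia : dia (U ∩ atomSet) = dia U := by
    ext x
    constructor
    · rintro ⟨z, hzx, hz, _⟩
      exact ⟨z, hzx, hz⟩
    · rintro ⟨z, hzx, hz⟩
      obtain ⟨m, hm, hmz⟩ := F1 z
      have hz' : z ∈ box (dia U) := hU ▸ hz
      obtain ⟨v, hvm, hv⟩ := hz' m hmz
      have h : v = m := F2 m hm v hvm
      exact ⟨m, le_trans hmz hzx, h ▸ hv, hm⟩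
  rw [hdia]
  exact hU

lemma key4 (W : Set XM3) (hW : W ⊆ atomSet) : box (dia W) ∩ atomSet = W := by
  ext x
  constructor
  · rintro ⟨hx, hxa⟩
    obtain ⟨v, hvx, hv⟩ := hx x le_rfl
    have h : v = x := F2 x hxa v hvx
    exact h ▸ hv
  · intro hx
    exact ⟨sub1 W hW hx, hW hx⟩

abbrev Atom : Type := {x : XM3 // x ∈ atomL}

instance : Fintype Atom := inferInstanceAs (Fintype {x : XM3 // x ∈ atomL})

instance : DecidableEq Atom := inferInstanceAs (DecidableEq {x : XM3 // x ∈ atomL})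

lemma img_sub (S : Set Atom) : Subtype.val '' S ⊆ atomSet := by
  rintro _ ⟨m, _, rfl⟩
  exact m.2

/-- Regular opens biject with sets of atoms. -/
def E : {U : Set XM3 // U = box (dia U)} ≃ Set Atom where
  toFun U := {m : Atom | (m : XM3) ∈ U.val}
  invFun S := ⟨box (dia (Subtype.val '' S)), key1 _ (img_sub S)⟩
  left_inv := by
    rintro ⟨U, hU⟩
    apply Subtype.ext
    have himg : Subtype.val '' {m : Atom | (m : XM3) ∈ U} = U ∩ atomSet := by
      ext x
      constructor
      · rintro ⟨m, hm, rfl⟩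
        exact ⟨hm, m.2⟩
      · rintro ⟨hx, hxa⟩
        exact ⟨⟨x, hxa⟩, hx, rfl⟩
    show box (dia (Subtype.val '' {m : Atom | (m : XM3) ∈ U})) = U
    rw [himg]
    exact (key2 U hU).symm
  right_inv := by
    intro S
    ext m
    show (m : XM3) ∈ box (dia (Subtype.val '' S)) ↔ m ∈ S
    constructor
    · intro h
      have h2 : (m : XM3) ∈ box (dia (Subtype.val '' S)) ∩ atomSet := ⟨h, m.2⟩
      rw [key4 _ (img_sub S)] at h2
      obtain ⟨m', hm', hval⟩ := h2
      exact (Subtype.val_injective hval) ▸ hm'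
    · intro h
      exact sub1 _ (img_sub S) ⟨m, h, rfl⟩

lemma card_atom : Fintype.card Atom = 6 := by decide

end Aux

/-- the regular open algebra `B(M₃)` is the 64-element Boolean
algebra whose atoms are exactly the six singletons `{(a,b)}`, `{(a,c)}`,
`{(b,a)}`, `{(b,c)}`, `{(c,a)}`, `{(c,b)}`. -/
theorem M3_regular_open_algebra_card_and_atoms :
    Set.ncard {U : Set XM3 | U = box (dia U)} = 64 ∧
    (∀ U : Set XM3, U = box (dia U) →
      ((U ≠ ∅ ∧ ∀ V : Set XM3, V = box (dia V) → V ⊆ U → V = ∅ ∨ V = U) ↔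
        U ∈ ({ {XM3.mk (M3.a, M3.b) (by decide)}, {XM3.mk (M3.a, M3.c) (by decide)},
               {XM3.mk (M3.b, M3.a) (by decide)}, {XM3.mk (M3.b, M3.c) (by decide)},
               {XM3.mk (M3.c, M3.a) (by decide)}, {XM3.mk (M3.c, M3.b) (by decide)} }
          : Set (Set XM3)))) := by
  constructor
  · rw [← Nat.card_coe_set_eq]
    have h1 : Nat.card {U : Set XM3 // U = box (dia U)} = Nat.card (Set Atom) :=
      Nat.card_congr E
    have h2 : Nat.card (Set Atom) = Nat.card (Finset Atom) :=
      Nat.card_congr Fintype.finsetEquivSet.symm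
    have h3 : Nat.card (Finset Atom) = 64 := by
      rw [Nat.card_eq_fintype_card, Fintype.card_finset, card_atom]; norm_num
    exact h1.trans (h2.trans h3)
  · intro U hU
    constructor
    · rintro ⟨hne, hmin⟩
      obtain ⟨u, hu⟩ := Set.nonempty_iff_ne_empty.mpr hne
      obtain ⟨m, hm, hmU⟩ := key3 U hU hu
      have hsub : ({m} : Set XM3) ⊆ U := by simpa using hmU
      rcases hmin {m} (singleton_reg m hm) hsub with h | h
      · exact absurd h (Set.singleton_ne_empty m)
      · subst h
        simp only [atomL] at hm; erw [List.mem_cons, List.mem_cons, List.mem_cons, List.mem_cons, List.mem_cons, List.mem_singleton] at hm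
        rcases hm with rfl | rfl | rfl | rfl | rfl | rfl
        · exact Or.inl rfl
        · exact Or.inr (Or.inl rfl)
        · exact Or.inr (Or.inr (Or.inl rfl))
        · exact Or.inr (Or.inr (Or.inr (Or.inl rfl)))
        · exact Or.inr (Or.inr (Or.inr (Or.inr (Or.inl rfl))))
        · exact Or.inr (Or.inr (Or.inr (Or.inr (Or.inr rfl))))
    · intro hmem
      have hp : ∃ p : XM3, U = {p} := by
        simp only [Set.mem_insert_iff, Set.mem_singleton_iff] at hmem
        rcases hmem with h | h | h | h | h | h <;> exact ⟨_, h⟩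
      obtain ⟨p, rfl⟩ := hp
      refine ⟨Set.singleton_ne_empty p, fun V _ hV => ?_⟩
      rcases Set.subset_singleton_iff_eq.mp hV with h | h
      · exact Or.inl h
      · exact Or.inr h
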